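/- Fix an integer N ≥ 3 and parameters λ_1, λ_2, … in [0,1]. Let ρ_1 = |GHZ_N⟩⟨GHZ_N| and ρ_k = (id ⊗ Φ_{λ_{k−1}})(ρ_{k−1}) for k ≥ 2 (the map acting on the N-th qubit). Then for every k ≥ 1, Tr(W^{λ_k} ρ_k) = 1 − ∏_{j=1}^{k−1} (1+√(1−λ_j²))/2 − λ_k/2^{k−1}. Consequently, the k-th sequential observer detects genuine multipartite entanglement, i.e., Tr(W^{λ_k} ρ_k) < 0, if and only if λ_k > 2^{k−1}·[1 − ∏_{j=1}^{k−1} (1+√(1−λ_j²))/2], a condition independent of N. -/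

import Mathlib

open Matrix
open scoped ComplexOrder

noncomputable section

/-- The space of operators on `N` qubits: complex `2^N × 2^N` matrices, with the
`N`-fold tensor-product structure made explicit by indexing rows and columns by
functions `Fin N → Fin 2`. -/
abbrev QM (N : ℕ) := Matrix (Fin N → Fin 2) (Fin N → Fin 2) ℂ

/-- The Pauli matrix σ_x. -/
def sigx : Matrix (Fin 2) (Fin 2) ℂ := !![0, 1; 1, 0]

/-- The Pauli matrix σ_z. -/
def sigz : Matrix (Fin 2) (Fin 2) ℂ := !![1, 0; 0, -1]

/-- The tensor (Kronecker) product `f 0 ⊗ f 1 ⊗ ⋯ ⊗ f (N-1)` of single-qubit operators. -/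
def tensorAll (N : ℕ) (f : Fin N → Matrix (Fin 2) (Fin 2) ℂ) : QM N :=
  Matrix.of fun v w => ∏ i, f i (v i) (w i)

/-- The single-qubit operator `M` acting on qubit `m`, tensored with the identity
on all other qubits. -/
def site (N : ℕ) (m : Fin N) (M : Matrix (Fin 2) (Fin 2) ℂ) : QM N :=
  tensorAll N (fun i => if i = m then M else 1)

/-- GHZ stabilizer generator `S_1 = σ_x^(1) σ_x^(2) ⋯ σ_x^(N)`. -/
def ghzS1 (N : ℕ) : QM N := tensorAll N (fun _ => sigx)

/-- GHZ stabilizer generator with σ_z on qubits `m-1` and `m` (0-based `m : Fin N`,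
`m ≠ 0`); it represents the 1-based generator `S_{m+1} = σ_z^{(m)} σ_z^{(m+1)}`. -/
def ghzSz (N : ℕ) (m : Fin N) : QM N :=
  tensorAll N (fun i => if i.val = m.val - 1 ∨ i = m then sigz else 1)

/-- The product `∏_{m=2}^{N} (I + S_m)/2` appearing in the GHZ witness
(the factors pairwise commute, so the list ordering is immaterial). -/
def ghzProd (N : ℕ) : QM N :=
  (((List.finRange N).filter (fun m => m.val ≠ 0)).map
    (fun m => (1/2 : ℂ) • ((1 : QM N) + ghzSz N m))).prod

/-- The GHZ genuine-multipartite-entanglement witness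
`W = 3 I − 2 [ (I + S_1)/2 + ∏_{m=2}^N (I + S_m)/2 ]`. -/
def ghzWitness (N : ℕ) : QM N :=
  (3 : ℂ) • (1 : QM N) -
    (2 : ℂ) • ((1/2 : ℂ) • ((1 : QM N) + ghzS1 N) + ghzProd N)

/-- The modified (unsharp) GHZ witness
`W^λ = 3 I − 2 [ (I + λ S_1)/2 + ∏_{m=2}^N (I + S_m)/2 ]`. -/
def ghzWitnessMod (N : ℕ) (lam : ℝ) : QM N :=
  (3 : ℂ) • (1 : QM N) -
    (2 : ℂ) • ((1/2 : ℂ) • ((1 : QM N) + (lam : ℂ) • ghzS1 N) + ghzProd N)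

/-- The `N`-qubit GHZ state vector `(|0⟩^{⊗N} + |1⟩^{⊗N})/√2`. -/
def ghzVec (N : ℕ) : (Fin N → Fin 2) → ℂ := fun v =>
  if ∀ i, v i = 0 then ((1 / Real.sqrt 2 : ℝ) : ℂ)
  else if ∀ i, v i = 1 then ((1 / Real.sqrt 2 : ℝ) : ℂ) else 0

/-- The rank-one projector `|ψ⟩⟨ψ|` onto a vector `ψ`. -/
def outer (N : ℕ) (ψ : (Fin N → Fin 2) → ℂ) : QM N :=
  Matrix.vecMulVec ψ (star ψ)

/-- The single-qubit unsharp-measurement channel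
`Φ_λ(ρ) = ((2+√(1−λ²))/4)ρ + (1/4)σ_z ρ σ_z + ((1−√(1−λ²))/4)σ_x ρ σ_x`, applied to
qubit `m` of an `N`-qubit operator (and acting as the identity on the other qubits). -/
def phiMap (N : ℕ) (m : Fin N) (lam : ℝ) (ρ : QM N) : QM N :=
  (((2 + Real.sqrt (1 - lam ^ 2)) / 4 : ℝ) : ℂ) • ρ
    + (1/4 : ℂ) • (site N m sigz * ρ * site N m sigz)
    + (((1 - Real.sqrt (1 - lam ^ 2)) / 4 : ℝ) : ℂ) • (site N m sigx * ρ * site N m sigx)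

lemma sigx_apply (a b : Fin 2) : sigx a b = if b = a + 1 then 1 else 0 := by
  fin_cases a <;> fin_cases b <;> simp [sigx]

lemma sigz_apply (a b : Fin 2) : sigz a b = if b = a then (if a = 0 then 1 else -1) else 0 := by
  fin_cases a <;> fin_cases b <;> simp [sigz]

lemma prodIndicator {ι : Type*} [Fintype ι] (Q : ι → Prop) [DecidablePred Q] :
    (∏ i, if Q i then (1:ℂ) else 0) = if ∀ i, Q i then 1 else 0 := by
  by_cases h : ∀ i, Q i
  · simp [h]
  · push_neg at h
    obtain ⟨i, hi⟩ := h
    rw [if_neg (by intro h'; exact hi (h' i))]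
    exact Finset.prod_eq_zero (Finset.mem_univ i) (by simp [hi])

lemma tensorAll_mul (N : ℕ) (f g : Fin N → Matrix (Fin 2) (Fin 2) ℂ) :
    tensorAll N f * tensorAll N g = tensorAll N (fun i => f i * g i) := by
  ext v w
  simp only [tensorAll, of_apply, mul_apply]
  rw [Finset.prod_univ_sum]
  rw [Fintype.piFinset_univ]
  exact Finset.sum_congr rfl fun u _ => (Finset.prod_mul_distrib).symm

lemma tensorAll_one (N : ℕ) : tensorAll N (fun _ => 1) = 1 := by
  ext v w
  simp only [tensorAll, of_apply, one_apply]
  have : ∀ i : Fin N, (1 : Matrix (Fin 2) (Fin 2) ℂ) (v i) (w i) = if w i = v i then 1 else 0 := by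
    intro i; rw [one_apply]; simp [eq_comm]
  simp only [this, prodIndicator]
  by_cases h : v = w
  · simp [h]
  · rw [if_neg, if_neg h]
    simp only [funext_iff] at h ⊢
    push_neg at h ⊢
    obtain ⟨i, hi⟩ := h; exact ⟨i, hi⟩

lemma tensorAll_indicator (N : ℕ) (f : Fin N → Matrix (Fin 2) (Fin 2) ℂ)
    (t : Fin N → Fin 2 → Fin 2) (hf : ∀ i a b, f i a b = if b = t i a then 1 else 0)
    (v w : Fin N → Fin 2) :
    tensorAll N f v w = if w = (fun i => t i (v i)) then 1 else 0 := by
  simp only [tensorAll, of_apply, hf, prodIndicator]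
  congr 1
  simp [funext_iff]

lemma one2_apply (a b : Fin 2) : (1 : Matrix (Fin 2) (Fin 2) ℂ) a b = if b = a then 1 else 0 := by
  rw [one_apply]; simp [eq_comm]

lemma site_sigx_apply (N : ℕ) (m : Fin N) (v w : Fin N → Fin 2) :
    site N m sigx v w = if w = Function.update v m (v m + 1) then 1 else 0 := by
  rw [site, tensorAll_indicator N _ (fun i a => if i = m then a + 1 else a)]
  · congr 1
    simp [funext_iff, Function.update_apply]
    constructor <;> (intro h i; have := h i; split_ifs at this ⊢ <;> simp_all)
  · intro i a b
    by_cases h : i = m <;> simp only [h, if_true, if_false, if_pos, if_neg] <;> simp [h, sigx_apply, one2_apply]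

lemma ghzS1_apply (N : ℕ) (v w : Fin N → Fin 2) :
    ghzS1 N v w = if w = (fun i => v i + 1) then 1 else 0 := by
  rw [ghzS1, tensorAll_indicator N _ (fun _ a => a + 1)]
  intro i a b; exact sigx_apply a b

-- diagonal tensors
lemma tensorAll_diagonal (N : ℕ) (f : Fin N → Matrix (Fin 2) (Fin 2) ℂ)
    (hf : ∀ i, f i 0 1 = 0 ∧ f i 1 0 = 0) :
    tensorAll N f = Matrix.diagonal (fun v => ∏ i, f i (v i) (v i)) := by
  ext v w
  by_cases h : v = w
  · subst h; simp [tensorAll, Matrix.diagonal_apply_eq]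
  · rw [Matrix.diagonal_apply_ne _ h]
    simp only [funext_iff] at h; push_neg at h
    obtain ⟨i, hi⟩ := h
    refine Finset.prod_eq_zero (Finset.mem_univ i) ?_
    have h2 : ∀ x : Fin 2, x = 0 ∨ x = 1 := by decide
    rcases h2 (v i) with h'|h' <;> rcases h2 (w i) with h''|h'' <;>
      simp_all [(hf i).1, (hf i).2]

def zc : Fin 2 → ℂ := fun a => if a = 0 then 1 else -1

def prev {N : ℕ} (m : Fin N) : Fin N := ⟨m.val - 1, by have := m.isLt; omega⟩

lemma two_cases : ∀ x : Fin 2, x = 0 ∨ x = 1 := by decide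

lemma sigz_aa (a : Fin 2) : sigz a a = zc a := by
  rcases two_cases a with h|h <;> subst h <;> simp [sigz, zc]

lemma one_aa (a : Fin 2) : (1 : Matrix (Fin 2) (Fin 2) ℂ) a a = 1 := by simp

lemma zc_mul_zc (a b : Fin 2) : zc a * zc b = if a = b then 1 else -1 := by
  rcases two_cases a with h|h <;> rcases two_cases b with h'|h' <;> subst h <;> subst h' <;>
    norm_num [zc]

lemma site_sigz (N : ℕ) (m : Fin N) :
    site N m sigz = Matrix.diagonal (fun v => zc (v m)) := by
  rw [site, tensorAll_diagonal]
  · refine congrArg Matrix.diagonal (funext fun v => ?_)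
    have key : ∀ i : Fin N, (if i = m then sigz else 1) (v i) (v i)
        = if i = m then zc (v i) else 1 := by
      intro i; by_cases h : i = m <;> simp [h, sigz_aa, one_aa]
    simp only [key]
    rw [Finset.prod_ite_eq' Finset.univ m (fun i => zc (v i)), if_pos (Finset.mem_univ m)]
  · intro i
    by_cases h : i = m <;> simp [h, sigz, one2_apply]

lemma ghzSz_diag (N : ℕ) (m : Fin N) (hm : m.val ≠ 0) :
    ghzSz N m = Matrix.diagonal (fun v => zc (v (prev m)) * zc (v m)) := by
  have hval : (prev m).val = m.val - 1 := rfl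
  have hne : prev m ≠ m := by
    intro h
    have : (prev m).val = m.val := by rw [h]
    omega
  rw [ghzSz, tensorAll_diagonal]
  · refine congrArg Matrix.diagonal (funext fun v => ?_)
    have key : ∀ i : Fin N, (if i.val = m.val - 1 ∨ i = m then sigz else 1) (v i) (v i)
        = (if i = prev m then zc (v i) else 1) * (if i = m then zc (v i) else 1) := by
      intro i
      by_cases h1 : i = prev m
      · have h2 : i ≠ m := h1 ▸ hne
        rw [if_pos (Or.inl (by rw [h1]; exact hval)), if_pos h1, if_neg h2, sigz_aa, mul_one]
      · by_cases h2 : i = m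
        · rw [if_pos (Or.inr h2), if_neg h1, if_pos h2, sigz_aa, one_mul]
        · rw [if_neg (by rintro (h|h); exact h1 (Fin.ext (h.trans hval.symm)); exact h2 h),
            if_neg h1, if_neg h2, one_aa, one_mul]
    simp only [key, Finset.prod_mul_distrib]
    rw [Finset.prod_ite_eq' Finset.univ (prev m) (fun i => zc (v i)),
        Finset.prod_ite_eq' Finset.univ m (fun i => zc (v i)),
        if_pos (Finset.mem_univ (prev m)), if_pos (Finset.mem_univ m)]
  · intro i
    by_cases h : i.val = m.val - 1 ∨ i = m <;> simp [h, sigz, one2_apply]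

lemma factor_diag (N : ℕ) (m : Fin N) (hm : m.val ≠ 0) :
    (1/2 : ℂ) • ((1 : QM N) + ghzSz N m)
      = Matrix.diagonal (fun v => if v (prev m) = v m then 1 else 0) := by
  rw [ghzSz_diag N m hm, ← Matrix.diagonal_one, Matrix.diagonal_add, ← Matrix.diagonal_smul]
  refine congrArg Matrix.diagonal (funext fun v => ?_)
  simp only [Pi.smul_apply]
  rw [zc_mul_zc]
  by_cases h : v (prev m) = v m <;> simp [h] <;> norm_num

lemma listprod_diagonal {n : Type*} [Fintype n] [DecidableEq n] {α : Type*}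
    (l : List α) (g : α → n → ℂ) :
    (l.map fun a => Matrix.diagonal (g a)).prod
      = Matrix.diagonal (fun v => (l.map fun a => g a v).prod) := by
  induction l with
  | nil => simp
  | cons a l ih => simp [ih, Matrix.diagonal_mul_diagonal]

lemma chain_const (N : ℕ) (v : Fin N → Fin 2)
    (h : ∀ m : Fin N, m.val ≠ 0 → v (prev m) = v m) : ∀ i j : Fin N, v i = v j := by
  have aux : ∀ n (hn : n < N), v ⟨n, hn⟩ = v ⟨0, by omega⟩ := by
    intro n
    induction n with
    | zero => intro hn; rfl
    | succ k ih =>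
      intro hn
      have h1 := h ⟨k+1, hn⟩ (by simp)
      have h2 : prev (⟨k+1, hn⟩ : Fin N) = ⟨k, by omega⟩ := rfl
      rw [h2] at h1
      rw [← h1]; exact ih (by omega)
  intro i j
  have hi := aux i.val i.isLt
  have hj := aux j.val j.isLt
  simp only [Fin.eta] at hi hj
  rw [hi, hj]

def pfun (N : ℕ) : (Fin N → Fin 2) → ℂ := fun v => if ∀ i j, v i = v j then 1 else 0

lemma ghzProd_diag (N : ℕ) : ghzProd N = Matrix.diagonal (pfun N) := by
  rw [ghzProd]
  have hmap : ((List.finRange N).filter (fun m => m.val ≠ 0)).map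
      (fun m => (1/2 : ℂ) • ((1 : QM N) + ghzSz N m))
      = ((List.finRange N).filter (fun m => m.val ≠ 0)).map
        (fun m => Matrix.diagonal (fun v => if v (prev m) = v m then (1:ℂ) else 0)) := by
    apply List.map_congr_left
    intro m hm
    rw [List.mem_filter] at hm
    exact factor_diag N m (by simpa using hm.2)
  rw [hmap, listprod_diagonal]
  refine congrArg Matrix.diagonal (funext fun v => ?_)
  by_cases h : ∀ i j, v i = v j
  · show _ = pfun N v
    rw [pfun]
    rw [if_pos h]
    apply List.prod_eq_one
    intro x hx
    rw [List.mem_map] at hx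
    obtain ⟨m, _, rfl⟩ := hx
    rw [if_pos (h _ _)]
  · show _ = pfun N v
    rw [pfun, if_neg h]
    have hex : ∃ m : Fin N, m.val ≠ 0 ∧ v (prev m) ≠ v m := by
      by_contra hc
      push_neg at hc
      exact h (chain_const N v hc)
    obtain ⟨m, hm0, hmne⟩ := hex
    apply List.prod_eq_zero
    rw [List.mem_map]
    refine ⟨m, ?_, by rw [if_neg hmne]⟩
    rw [List.mem_filter]
    exact ⟨List.mem_finRange m, by simpa using hm0⟩

-- 2x2 identities
lemma sigzz : sigz * sigz = 1 := by
  ext i j; fin_cases i <;> fin_cases j <;>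
    simp [sigz, mul_apply, Fin.sum_univ_two, one2_apply]
lemma sigxx : sigx * sigx = 1 := by
  ext i j; fin_cases i <;> fin_cases j <;>
    simp [sigx, mul_apply, Fin.sum_univ_two, one2_apply]
lemma sigzxz : sigz * sigx * sigz = -sigx := by
  ext i j; fin_cases i <;> fin_cases j <;>
    simp [sigz, sigx, mul_apply, Fin.sum_univ_two]
lemma sigxxx : sigx * sigx * sigx = sigx := by rw [sigxx, one_mul]

lemma site_mul_site (N : ℕ) (m : Fin N) (A B : Matrix (Fin 2) (Fin 2) ℂ) :
    site N m A * site N m B = site N m (A * B) := by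
  rw [site, site, site, tensorAll_mul]
  refine congrArg (tensorAll N) (funext fun i => ?_)
  by_cases h : i = m <;> simp [h]

lemma siteZZ (N : ℕ) (m : Fin N) : site N m sigz * site N m sigz = 1 := by
  rw [site_mul_site, sigzz, site]
  rw [show (fun i : Fin N => if i = m then (1 : Matrix (Fin 2) (Fin 2) ℂ) else 1)
      = fun _ => 1 from funext fun i => by by_cases h : i = m <;> simp [h]]
  exact tensorAll_one N

lemma siteXX (N : ℕ) (m : Fin N) : site N m sigx * site N m sigx = 1 := by
  rw [site_mul_site, sigxx, site]
  rw [show (fun i : Fin N => if i = m then (1 : Matrix (Fin 2) (Fin 2) ℂ) else 1)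
      = fun _ => 1 from funext fun i => by by_cases h : i = m <;> simp [h]]
  exact tensorAll_one N

lemma tensorAll_neg (N : ℕ) (m : Fin N) (g : Fin N → Matrix (Fin 2) (Fin 2) ℂ) :
    tensorAll N (fun i => if i = m then -g i else g i) = - tensorAll N g := by
  ext v w
  rw [Matrix.neg_apply]
  simp only [tensorAll, of_apply]
  have key : ∀ i : Fin N, (if i = m then -g i else g i) (v i) (w i)
      = (if i = m then (-1 : ℂ) else 1) * g i (v i) (w i) := by
    intro i; by_cases h : i = m <;> simp [h]
  simp only [key, Finset.prod_mul_distrib]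
  rw [Finset.prod_ite_eq' Finset.univ m (fun _ => (-1 : ℂ)), if_pos (Finset.mem_univ m)]
  ring

lemma conjZ_S1 (N : ℕ) (m : Fin N) :
    site N m sigz * ghzS1 N * site N m sigz = - ghzS1 N := by
  rw [site, ghzS1, tensorAll_mul, tensorAll_mul]
  have : (fun i : Fin N => (if i = m then sigz else 1) * sigx * (if i = m then sigz else 1))
      = fun i => if i = m then -sigx else sigx := by
    funext i; by_cases h : i = m <;> simp [h, sigzxz]
  rw [this, show (fun i : Fin N => if i = m then -sigx else sigx)
      = fun i => if i = m then -(fun _ : Fin N => sigx) i else (fun _ : Fin N => sigx) i from rfl,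
    tensorAll_neg]

lemma conjX_S1 (N : ℕ) (m : Fin N) :
    site N m sigx * ghzS1 N * site N m sigx = ghzS1 N := by
  rw [site, ghzS1, tensorAll_mul, tensorAll_mul]
  refine congrArg (tensorAll N) (funext fun i => ?_)
  by_cases h : i = m <;> simp [h, sigxxx]

def fl {N : ℕ} (m : Fin N) (v : Fin N → Fin 2) : Fin N → Fin 2 :=
  Function.update v m (v m + 1)

lemma fl_fl {N : ℕ} (m : Fin N) (v : Fin N → Fin 2) : fl m (fl m v) = v := by
  funext i
  simp only [fl, Function.update_apply]
  by_cases h : i = m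
  · subst h
    simp only [if_pos rfl]
    have : ∀ a : Fin 2, a + 1 + 1 = a := by decide
    exact this (v i)
  · simp [h]

lemma conjZ_diag (N : ℕ) (m : Fin N) (d : (Fin N → Fin 2) → ℂ) :
    site N m sigz * Matrix.diagonal d * site N m sigz = Matrix.diagonal d := by
  rw [site_sigz, Matrix.diagonal_mul_diagonal, Matrix.diagonal_mul_diagonal]
  refine congrArg Matrix.diagonal (funext fun v => ?_)
  have : zc (v m) * zc (v m) = 1 := by rcases two_cases (v m) with h|h <;> simp [h, zc]
  calc zc (v m) * d v * zc (v m) = zc (v m) * zc (v m) * d v := by ring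
    _ = d v := by rw [this, one_mul]

lemma site_sigx_apply' (N : ℕ) (m : Fin N) (v w : Fin N → Fin 2) :
    site N m sigx v w = if w = fl m v then 1 else 0 := site_sigx_apply N m v w

lemma conjX_diag (N : ℕ) (m : Fin N) (d : (Fin N → Fin 2) → ℂ) :
    site N m sigx * Matrix.diagonal d * site N m sigx
      = Matrix.diagonal (fun v => d (fl m v)) := by
  ext v w
  rw [mul_assoc, Matrix.mul_apply]
  simp only [Matrix.mul_apply, site_sigx_apply', Matrix.diagonal_apply]
  rw [Finset.sum_eq_single (fl m v)]
  · rw [if_pos rfl, one_mul, Finset.sum_eq_single (fl m v)]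
    · rw [if_pos rfl, fl_fl]
      by_cases h : v = w <;> simp [h, eq_comm]
    · intro x _ hx
      rw [if_neg (Ne.symm hx), zero_mul]
    · intro hc; exact absurd (Finset.mem_univ _) hc
  · intro u _ hu
    rw [if_neg hu, zero_mul]
  · intro hc; exact absurd (Finset.mem_univ _) hc

section ghz
variable (N : ℕ) (hN : 0 < N)

def cz : Fin N → Fin 2 := fun _ => 0
def co : Fin N → Fin 2 := fun _ => 1

lemma cz_ne_co (hN : 0 < N) : cz N ≠ co N := by
  intro h
  have := congrFun h ⟨0, hN⟩
  simp [cz, co] at this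

lemma ghz_cz : ghzVec N (cz N) = ((1 / Real.sqrt 2 : ℝ) : ℂ) := by
  rw [ghzVec, if_pos (show ∀ i, cz N i = 0 from fun _ => rfl)]

lemma ghz_co (hN : 0 < N) : ghzVec N (co N) = ((1 / Real.sqrt 2 : ℝ) : ℂ) := by
  rw [ghzVec, if_neg, if_pos (show ∀ i, co N i = 1 from fun _ => rfl)]
  intro h
  have := h ⟨0, hN⟩
  simp [co] at this

lemma ghz_other (v : Fin N → Fin 2) (h0 : v ≠ cz N) (h1 : v ≠ co N) : ghzVec N v = 0 := by
  rw [ghzVec, if_neg, if_neg]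
  · intro h; exact h1 (funext h)
  · intro h; exact h0 (funext h)

-- sum over the state support
lemma sum_pair_support (hN : 0 < N) (f : (Fin N → Fin 2) → ℂ)
    (hf : ∀ v, v ≠ cz N → v ≠ co N → f v = 0) :
    ∑ v, f v = f (cz N) + f (co N) := by
  rw [← Finset.sum_pair (cz_ne_co N hN)]
  refine (Finset.sum_subset (Finset.subset_univ _) ?_).symm
  intro v _ hv
  simp only [Finset.mem_insert, Finset.mem_singleton] at hv
  push_neg at hv
  exact hf v hv.1 hv.2

lemma r_sq : ((1 / Real.sqrt 2 : ℝ) : ℂ) * ((1 / Real.sqrt 2 : ℝ) : ℂ) = 1/2 := by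
  rw [← Complex.ofReal_mul]
  have : (1 / Real.sqrt 2) * (1 / Real.sqrt 2) = 1/2 := by
    rw [div_mul_div_comm, Real.mul_self_sqrt (by norm_num : (0:ℝ) ≤ 2)]
    norm_num
  rw [this]
  norm_num

end ghz

lemma trace_diag_outer (N : ℕ) (d : (Fin N → Fin 2) → ℂ) (a b : (Fin N → Fin 2) → ℂ) :
    (Matrix.diagonal d * Matrix.vecMulVec a b).trace = ∑ v, d v * (a v * b v) := by
  simp [Matrix.trace, Matrix.diag, Matrix.diagonal_mul, Matrix.vecMulVec_apply]

lemma trace_outer (N : ℕ) (a b : (Fin N → Fin 2) → ℂ) :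
    (Matrix.vecMulVec a b).trace = ∑ v, a v * b v := by
  simp [Matrix.trace, Matrix.diag, Matrix.vecMulVec_apply]

lemma star_r : star ((1 / Real.sqrt 2 : ℝ) : ℂ) = ((1 / Real.sqrt 2 : ℝ) : ℂ) :=
  Complex.conj_ofReal _

lemma init_trace (N : ℕ) (hN : 0 < N) : (outer N (ghzVec N)).trace = 1 := by
  rw [outer, trace_outer]
  rw [sum_pair_support N hN _ (fun v h0 h1 => by
    rw [Pi.star_apply, ghz_other N v h0 h1, star_zero, mul_zero])]
  simp only [Pi.star_apply]
  rw [ghz_cz, ghz_co N hN, star_r, r_sq]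
  norm_num

lemma flAll_cz (N : ℕ) : (fun i => cz N i + 1) = co N := by
  funext i; rfl

lemma flAll_co (N : ℕ) : (fun i => co N i + 1) = cz N := by
  funext i; show (1 : Fin 2) + 1 = 0; decide

lemma init_S1 (N : ℕ) (hN : 0 < N) : (ghzS1 N * outer N (ghzVec N)).trace = 1 := by
  rw [outer]
  have expand : (ghzS1 N * Matrix.vecMulVec (ghzVec N) (star (ghzVec N))).trace
      = ∑ v, ∑ w, ghzS1 N v w * (ghzVec N w * star (ghzVec N v)) := by
    simp [Matrix.trace, Matrix.diag, Matrix.mul_apply, Matrix.vecMulVec_apply, Finset.mul_sum,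
      mul_assoc]
  rw [expand]
  have inner : ∀ v, (∑ w, ghzS1 N v w * (ghzVec N w * star (ghzVec N v)))
      = ghzVec N (fun i => v i + 1) * star (ghzVec N v) := by
    intro v
    have : ∀ w, ghzS1 N v w * (ghzVec N w * star (ghzVec N v))
        = if w = (fun i => v i + 1) then ghzVec N w * star (ghzVec N v) else 0 := by
      intro w
      rw [ghzS1_apply]
      by_cases h : w = (fun i => v i + 1) <;> simp [h]
    simp only [this]
    rw [Finset.sum_ite_eq' Finset.univ _ (fun w => ghzVec N w * star (ghzVec N v)),
      if_pos (Finset.mem_univ _)]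
  simp only [inner]
  rw [sum_pair_support N hN _ (fun v h0 h1 => by
    rw [ghz_other N v h0 h1, star_zero, mul_zero])]
  rw [flAll_cz, flAll_co, ghz_cz, ghz_co N hN, star_r, r_sq]
  norm_num

lemma pfun_cz (N : ℕ) : pfun N (cz N) = 1 := by
  rw [pfun]
  exact if_pos (fun i j => (rfl : (0 : Fin 2) = 0))

lemma pfun_co (N : ℕ) : pfun N (co N) = 1 := by
  rw [pfun]
  exact if_pos (fun i j => (rfl : (1 : Fin 2) = 1))

lemma init_P (N : ℕ) (hN : 0 < N) :
    (Matrix.diagonal (pfun N) * outer N (ghzVec N)).trace = 1 := by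
  rw [outer, trace_diag_outer]
  rw [sum_pair_support N hN _ (fun v h0 h1 => by
    rw [Pi.star_apply, ghz_other N v h0 h1, star_zero, mul_zero, mul_zero])]
  simp only [Pi.star_apply]
  rw [ghz_cz, ghz_co N hN, star_r, r_sq, pfun_cz, pfun_co]
  norm_num

lemma pfun_fl_cz (N : ℕ) (hN : 2 ≤ N) (m : Fin N) : pfun N (fl m (cz N)) = 0 := by
  rw [pfun, if_neg]
  intro h
  obtain ⟨j, hj⟩ : ∃ j : Fin N, j ≠ m := by
    rcases two_cases' : (m : ℕ) with _|_
    · exact ⟨⟨1, by omega⟩, by intro hc; rw [← hc] at two_cases'; simp at two_cases'⟩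
    · exact ⟨⟨0, by omega⟩, by intro hc; rw [← hc] at two_cases'; simp at two_cases'⟩
  have h1 := h m j
  rw [fl, Function.update_self, Function.update_of_ne hj] at h1
  simp [cz] at h1

lemma pfun_fl_co (N : ℕ) (hN : 2 ≤ N) (m : Fin N) : pfun N (fl m (co N)) = 0 := by
  rw [pfun, if_neg]
  intro h
  obtain ⟨j, hj⟩ : ∃ j : Fin N, j ≠ m := by
    rcases two_cases' : (m : ℕ) with _|_
    · exact ⟨⟨1, by omega⟩, by intro hc; rw [← hc] at two_cases'; simp at two_cases'⟩
    · exact ⟨⟨0, by omega⟩, by intro hc; rw [← hc] at two_cases'; simp at two_cases'⟩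
  have h1 := h m j
  rw [fl, Function.update_self, Function.update_of_ne hj] at h1
  rw [show (co N m : Fin 2) = 1 from rfl, show (co N j : Fin 2) = 1 from rfl] at h1
  exact absurd h1 (by decide)

lemma init_Pf (N : ℕ) (hN : 2 ≤ N) (m : Fin N) :
    (Matrix.diagonal (fun v => pfun N (fl m v)) * outer N (ghzVec N)).trace = 0 := by
  rw [outer, trace_diag_outer]
  rw [sum_pair_support N (by omega) _ (fun v h0 h1 => by
    rw [Pi.star_apply, ghz_other N v h0 h1, star_zero, mul_zero, mul_zero])]
  rw [pfun_fl_cz N hN m, pfun_fl_co N hN m]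
  ring

lemma trace_cyc (N : ℕ) (A B C ρ : QM N) :
    (A * (B * ρ * C)).trace = ((C * A * B) * ρ).trace := by
  rw [show A * (B * ρ * C) = (A * B * ρ) * C by simp [mul_assoc], Matrix.trace_mul_comm,
    show C * (A * B * ρ) = (C * A * B) * ρ by simp [mul_assoc]]

lemma trace_phi (N : ℕ) (m : Fin N) (lam : ℝ) (A ρ : QM N) :
    (A * phiMap N m lam ρ).trace
      = (((2 + Real.sqrt (1 - lam ^ 2)) / 4 : ℝ) : ℂ) * (A * ρ).trace
        + (1/4 : ℂ) * ((site N m sigz * A * site N m sigz) * ρ).trace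
        + (((1 - Real.sqrt (1 - lam ^ 2)) / 4 : ℝ) : ℂ)
            * ((site N m sigx * A * site N m sigx) * ρ).trace := by
  rw [phiMap, mul_add, mul_add, Matrix.trace_add, Matrix.trace_add,
    mul_smul_comm, mul_smul_comm, mul_smul_comm,
    Matrix.trace_smul, Matrix.trace_smul, Matrix.trace_smul,
    trace_cyc, trace_cyc]
  simp [smul_eq_mul]

lemma invariant (N : ℕ) (hN : 3 ≤ N)
    (lam : ℕ → ℝ)
    (ρ : ℕ → QM N)
    (hinit : ρ 1 = outer N (ghzVec N))
    (hrec : ∀ k, 1 ≤ k → ρ (k + 1) = phiMap N ⟨N - 1, Nat.sub_lt (Nat.lt_of_lt_of_le (Nat.succ_pos 2) hN) Nat.one_pos⟩ (lam k) (ρ k)) :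
    ∀ k, 1 ≤ k →
      (ρ k).trace = 1 ∧
      (ghzS1 N * ρ k).trace = ((1:ℂ)/2)^(k-1) ∧
      (Matrix.diagonal (pfun N) * ρ k).trace
        = (((1 + ∏ j ∈ Finset.Icc 1 (k - 1), (1 + Real.sqrt (1 - lam j ^ 2)) / 2) / 2 : ℝ) : ℂ) ∧
      (Matrix.diagonal (fun v => pfun N (fl (⟨N - 1, Nat.sub_lt (Nat.lt_of_lt_of_le (Nat.succ_pos 2) hN) Nat.one_pos⟩ : Fin N) v)) * ρ k).trace
        = (((1 - ∏ j ∈ Finset.Icc 1 (k - 1), (1 + Real.sqrt (1 - lam j ^ 2)) / 2) / 2 : ℝ) : ℂ) := by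
  set L : Fin N := ⟨N - 1, Nat.sub_lt (Nat.lt_of_lt_of_le (Nat.succ_pos 2) hN) Nat.one_pos⟩ with hL
  intro k hk
  induction k, hk using Nat.le_induction with
  | base =>
    rw [hinit]
    simp only [Nat.sub_self, Finset.Icc_self, Finset.Icc_eq_empty_of_lt (by norm_num : (1:ℕ) > 0)]
    refine ⟨init_trace N (by omega), ?_, ?_, ?_⟩
    · rw [init_S1 N (by omega)]; simp
    · rw [init_P N (by omega)]; norm_num
    · rw [init_Pf N (by omega) L]; norm_num
  | succ k hk ih =>
    obtain ⟨iht, ihs, ihp, ihq⟩ := ih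
    have hρ := hrec k hk
    have hk1 : k - 1 + 1 = k := by omega
    set σ : ℝ := Real.sqrt (1 - lam k ^ 2) with hσ
    set π : ℝ := ∏ j ∈ Finset.Icc 1 (k - 1), (1 + Real.sqrt (1 - lam j ^ 2)) / 2 with hπ
    have hprod : ∏ j ∈ Finset.Icc 1 (k + 1 - 1), (1 + Real.sqrt (1 - lam j ^ 2)) / 2
        = π * ((1 + σ) / 2) := by
      rw [Nat.add_sub_cancel, ← hk1, Finset.prod_Icc_succ_top (by omega : 1 ≤ k - 1 + 1), hk1, hπ]
    -- trace of ρ (k+1)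
    have h1 : (ρ (k+1)).trace = 1 := by
      have e := trace_phi N L (lam k) 1 (ρ k)
      simp only [one_mul, mul_one, siteZZ, siteXX] at e
      rw [hρ, e, iht]
      push_cast
      ring
    have h2 : (ghzS1 N * ρ (k+1)).trace = ((1:ℂ)/2)^(k+1-1) := by
      rw [hρ, trace_phi N L (lam k) (ghzS1 N) (ρ k), conjZ_S1, conjX_S1, neg_mul,
        Matrix.trace_neg, ihs, Nat.add_sub_cancel]
      conv_rhs => rw [← hk1, pow_succ]
      push_cast
      ring
    have h3 : (Matrix.diagonal (pfun N) * ρ (k+1)).trace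
        = (((1 + π * ((1 + σ) / 2)) / 2 : ℝ) : ℂ) := by
      rw [hρ, trace_phi N L (lam k) _ (ρ k), conjZ_diag, conjX_diag, ihp, ihq]
      push_cast
      ring
    have h4 : (Matrix.diagonal (fun v => pfun N (fl L v)) * ρ (k+1)).trace
        = (((1 - π * ((1 + σ) / 2)) / 2 : ℝ) : ℂ) := by
      rw [hρ, trace_phi N L (lam k) _ (ρ k), conjZ_diag, conjX_diag]
      simp only [fl_fl]
      rw [ihp, ihq]
      push_cast
      ring
    rw [hprod]
    exact ⟨h1, h2, h3, h4⟩


/-- Fix an integer `N ≥ 3` and parameters `λ_1, λ_2, …` in `[0,1]`.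
Let `ρ_1 = |GHZ_N⟩⟨GHZ_N|` and `ρ_k = (id ⊗ Φ_{λ_{k−1}})(ρ_{k−1})` for `k ≥ 2` (the map
acting on the `N`-th qubit). Then for every `k ≥ 1`,
`Tr(W^{λ_k} ρ_k) = 1 − ∏_{j=1}^{k−1} (1+√(1−λ_j²))/2 − λ_k/2^{k−1}`.
Consequently, the `k`-th sequential observer detects genuine multipartite entanglement,
i.e. `Tr(W^{λ_k} ρ_k) < 0`, if and only if
`λ_k > 2^{k−1}·[1 − ∏_{j=1}^{k−1} (1+√(1−λ_j²))/2]`, a condition independent of `N`. -/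
theorem ghz_sequential_witness_trace
    (N : ℕ) (hN : 3 ≤ N)
    (lam : ℕ → ℝ) (hlam : ∀ j, lam j ∈ Set.Icc (0 : ℝ) 1)
    (ρ : ℕ → QM N)
    (hinit : ρ 1 = outer N (ghzVec N))
    (hrec : ∀ k, 1 ≤ k → ρ (k + 1) = phiMap N ⟨N - 1, by omega⟩ (lam k) (ρ k)) :
    ∀ k, 1 ≤ k →
      (ghzWitnessMod N (lam k) * ρ k).trace
        = ((1 - ∏ j ∈ Finset.Icc 1 (k - 1), (1 + Real.sqrt (1 - lam j ^ 2)) / 2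
            - lam k / 2 ^ (k - 1) : ℝ) : ℂ) ∧
      (((ghzWitnessMod N (lam k) * ρ k).trace).re < 0 ↔
        lam k > (2 : ℝ) ^ (k - 1)
          * (1 - ∏ j ∈ Finset.Icc 1 (k - 1), (1 + Real.sqrt (1 - lam j ^ 2)) / 2)) := by
  intro k hk
  obtain ⟨h1, h2, h3, _⟩ := invariant N hN lam ρ hinit hrec k hk
  set π : ℝ := ∏ j ∈ Finset.Icc 1 (k - 1), (1 + Real.sqrt (1 - lam j ^ 2)) / 2 with hπ
  have hp2 : (0:ℝ) < 2 ^ (k - 1) := by positivity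
  have htr : (ghzWitnessMod N (lam k) * ρ k).trace
      = ((1 - π - lam k / 2 ^ (k - 1) : ℝ) : ℂ) := by
    rw [ghzWitnessMod, ghzProd_diag]
    simp only [sub_mul, add_mul, smul_mul_assoc, one_mul, smul_add,
      Matrix.trace_sub, Matrix.trace_add, Matrix.trace_smul, smul_eq_mul]
    rw [h1, h2, h3]
    have hpow : ((1:ℂ)/2) ^ (k-1) = ((2:ℂ) ^ (k-1))⁻¹ := by
      rw [one_div, inv_pow]
    rw [hpow]
    have h2pow : ((2:ℂ) ^ (k-1)) ≠ 0 := by positivity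
    push_cast
    field_simp
    ring
  refine ⟨htr, ?_⟩
  rw [htr, Complex.ofReal_re]
  have key : (1 - π - lam k / 2 ^ (k - 1) < 0) ↔ (2:ℝ) ^ (k-1) * (1 - π) < lam k := by
    rw [sub_neg, lt_div_iff₀ hp2, mul_comm]
  rw [gt_iff_lt]
  exact key

end
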